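/- If G has an efficient dominating set and H is a Roman graph, then the strong product G ⊠ H is a Roman graph, i.e., γ_R(G ⊠ H) = 2γ(G ⊠ H). -/

import Mathlib

open Finset

/-- A set `S` is a dominating set of `G` if every vertex outside `S` has a neighbor in `S`. -/
def IsDominatingSet {V : Type*} (G : SimpleGraph V) (S : Set V) : Prop :=
  ∀ v, v ∉ S → ∃ u ∈ S, G.Adj u v

/-- The domination number `γ(G)`. -/
noncomputable def domNum {V : Type*} [Fintype V] (G : SimpleGraph V) : ℕ :=
  sInf {n | ∃ S : Finset V, IsDominatingSet G ↑S ∧ S.card = n}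

/-- A Roman dominating function: values in {0,1,2}, every vertex of value 0 has a
neighbor of value 2. -/
def IsRDF {V : Type*} (G : SimpleGraph V) (f : V → ℕ) : Prop :=
  (∀ v, f v ≤ 2) ∧ ∀ v, f v = 0 → ∃ u, G.Adj u v ∧ f u = 2

/-- The Roman domination number `γ_R(G)`. -/
noncomputable def romanDomNum {V : Type*} [Fintype V] (G : SimpleGraph V) : ℕ :=
  sInf {n | ∃ f : V → ℕ, IsRDF G f ∧ ∑ v, f v = n}

/-- The strong product of graphs. -/
def strongProd {V W : Type*} (G : SimpleGraph V) (H : SimpleGraph W) :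
    SimpleGraph (V × W) where
  Adj x y := x ≠ y ∧ (x.1 = y.1 ∨ G.Adj x.1 y.1) ∧ (x.2 = y.2 ∨ H.Adj x.2 y.2)
  symm := ⟨fun x y => by
    rintro ⟨h, h1, h2⟩
    refine ⟨h.symm, ?_, ?_⟩
    · cases h1 with
      | inl h => exact Or.inl h.symm
      | inr h => exact Or.inr h.symm
    · cases h2 with
      | inl h => exact Or.inl h.symm
      | inr h => exact Or.inr h.symm⟩
  loopless := ⟨fun x => by simp⟩

/-- `G` has an efficient dominating set: a dominating set whose elements have
pairwise disjoint closed neighborhoods. -/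
def HasEfficientDomSet {V : Type*} (G : SimpleGraph V) : Prop :=
  ∃ S : Finset V, IsDominatingSet G ↑S ∧
    ∀ u ∈ S, ∀ v ∈ S, u ≠ v →
      Disjoint (insert u (G.neighborSet u)) (insert v (G.neighborSet v))

lemma domNum_spec {V : Type*} [Fintype V] (G : SimpleGraph V) :
    ∃ S : Finset V, IsDominatingSet G ↑S ∧ S.card = domNum G := by
  have h : domNum G ∈ {n | ∃ S : Finset V, IsDominatingSet G ↑S ∧ S.card = n} := by
    apply Nat.sInf_mem
    exact ⟨Finset.univ.card, Finset.univ, fun v hv => absurd (by simp) hv, rfl⟩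
  obtain ⟨S, hS, hc⟩ := h
  exact ⟨S, hS, hc⟩

lemma roman_le_two_dom {V : Type*} [Fintype V] (G : SimpleGraph V) :
    romanDomNum G ≤ 2 * domNum G := by
  classical
  obtain ⟨S, hS, hcard⟩ := domNum_spec G
  apply Nat.sInf_le
  refine ⟨fun v => if v ∈ S then 2 else 0, ⟨fun v => by dsimp only; split <;> omega, fun v hv => ?_⟩, ?_⟩
  · by_cases hvS : v ∈ S
    · simp [hvS] at hv
    · obtain ⟨u, hu, ha⟩ := hS v hvS
      exact ⟨u, ha, by simp [Finset.mem_coe.mp hu]⟩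
  · rw [Finset.sum_ite_mem, Finset.univ_inter, Finset.sum_const, smul_eq_mul, hcard, mul_comm]

lemma dom_prod_le {V W : Type*} [Fintype V] [Fintype W] (G : SimpleGraph V) (H : SimpleGraph W) :
    domNum (strongProd G H) ≤ domNum G * domNum H := by
  classical
  obtain ⟨SG, hSG, hcG⟩ := domNum_spec G
  obtain ⟨SH, hSH, hcH⟩ := domNum_spec H
  apply Nat.sInf_le
  refine ⟨SG ×ˢ SH, ?_, by rw [Finset.card_product, hcG, hcH]⟩
  intro p hp
  have h1 : ∃ u ∈ SG, u = p.1 ∨ G.Adj u p.1 := by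
    by_cases h : p.1 ∈ SG
    · exact ⟨p.1, h, Or.inl rfl⟩
    · obtain ⟨u, hu, ha⟩ := hSG p.1 h; exact ⟨u, hu, Or.inr ha⟩
  have h2 : ∃ x ∈ SH, x = p.2 ∨ H.Adj x p.2 := by
    by_cases h : p.2 ∈ SH
    · exact ⟨p.2, h, Or.inl rfl⟩
    · obtain ⟨x, hx, ha⟩ := hSH p.2 h; exact ⟨x, hx, Or.inr ha⟩
  obtain ⟨u, hu, hu'⟩ := h1
  obtain ⟨x, hx, hx'⟩ := h2
  have hmem : (u, x) ∈ SG ×ˢ SH := Finset.mem_product.mpr ⟨hu, hx⟩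
  refine ⟨(u, x), hmem, ?_, hu', hx'⟩
  intro heq
  exact hp (heq ▸ (Finset.mem_coe.mpr hmem))

lemma key_lb {V W : Type*} [Fintype V] [Fintype W]
    (G : SimpleGraph V) (H : SimpleGraph W) (hG : HasEfficientDomSet G) :
    domNum G * romanDomNum H ≤ romanDomNum (strongProd G H) := by
  classical
  obtain ⟨D, hDdom, hDdisj⟩ := hG
  apply le_csInf
  · exact ⟨∑ p : V × W, 1, fun _ => 1, ⟨fun v => one_le_two, fun v h => absurd h (by simp)⟩, rfl⟩
  rintro n ⟨f, ⟨hf2, hf0⟩, rfl⟩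
  set N : V → Finset V := fun g => insert g (G.neighborFinset g) with hN
  have hmemN : ∀ g v, v ∈ N g ↔ v = g ∨ G.Adj g v := by
    intro g v; simp [hN, SimpleGraph.mem_neighborFinset]
  have hfg : ∀ g ∈ D, romanDomNum H ≤ ∑ w, min 2 (∑ v ∈ N g, f (v, w)) := by
    intro g hg
    apply Nat.sInf_le
    refine ⟨fun w => min 2 (∑ v ∈ N g, f (v, w)), ⟨fun w => min_le_left _ _, ?_⟩, rfl⟩
    intro w hw
    have hsum : ∑ v ∈ N g, f (v, w) = 0 := by
      rcases Nat.min_eq_zero_iff.mp hw with h | h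
      · omega
      · exact h
    have hzero : ∀ v ∈ N g, f (v, w) = 0 := Finset.sum_eq_zero_iff.mp hsum
    have hgw : f (g, w) = 0 := hzero g (by rw [hmemN]; exact Or.inl rfl)
    obtain ⟨p, hadj, hp2⟩ := hf0 (g, w) hgw
    obtain ⟨hne, h1, h2⟩ := hadj
    have hp1 : p.1 ∈ N g := by
      rw [hmemN]
      rcases h1 with h | h
      · exact Or.inl h
      · exact Or.inr h.symm
    rcases h2 with h | h
    · exfalso
      have hz := hzero p.1 hp1
      rw [show ((p.1 : V), w) = p from Prod.ext rfl h.symm] at hz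
      omega
    · refine ⟨p.2, h, ?_⟩
      have hle : 2 ≤ ∑ v ∈ N g, f (v, p.2) := by
        have hs := Finset.single_le_sum (f := fun v => f (v, p.2))
          (fun i _ => Nat.zero_le _) hp1
        rw [show ((p.1 : V), p.2) = p from Prod.ext rfl rfl, hp2] at hs
        exact hs
      exact min_eq_left hle
  have hDcard : domNum G ≤ D.card := Nat.sInf_le ⟨D, hDdom, rfl⟩
  have hdisj : (↑D : Set V).PairwiseDisjoint N := by
    intro g1 h1 g2 h2 hne
    have hd := hDdisj g1 h1 g2 h2 hne
    rw [Function.onFun, Finset.disjoint_left]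
    intro a ha1 ha2
    have ha1' : a ∈ (insert g1 (G.neighborSet g1) : Set V) := by
      rw [hmemN] at ha1
      rcases ha1 with h | h
      · exact Or.inl h
      · exact Or.inr h
    have ha2' : a ∈ (insert g2 (G.neighborSet g2) : Set V) := by
      rw [hmemN] at ha2
      rcases ha2 with h | h
      · exact Or.inl h
      · exact Or.inr h
    exact Set.disjoint_left.mp hd ha1' ha2'
  calc domNum G * romanDomNum H ≤ D.card * romanDomNum H :=
        Nat.mul_le_mul_right _ hDcard
    _ = ∑ _g ∈ D, romanDomNum H := by rw [Finset.sum_const, smul_eq_mul]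
    _ ≤ ∑ g ∈ D, ∑ w, min 2 (∑ v ∈ N g, f (v, w)) := Finset.sum_le_sum hfg
    _ ≤ ∑ g ∈ D, ∑ w, ∑ v ∈ N g, f (v, w) := by
        refine Finset.sum_le_sum fun g _ => Finset.sum_le_sum fun w _ => min_le_right _ _
    _ = ∑ g ∈ D, ∑ v ∈ N g, ∑ w, f (v, w) :=
        Finset.sum_congr rfl fun g _ => Finset.sum_comm
    _ = ∑ v ∈ D.biUnion N, ∑ w, f (v, w) := (Finset.sum_biUnion hdisj).symm
    _ ≤ ∑ v, ∑ w, f (v, w) := Finset.sum_le_sum_of_subset (Finset.subset_univ _)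
    _ = ∑ p : V × W, f p := (Fintype.sum_prod_type _).symm

theorem stmt19 {V W : Type*} [Fintype V] [Fintype W]
    (G : SimpleGraph V) (H : SimpleGraph W) (hG : HasEfficientDomSet G)
    (hRoman : romanDomNum H = 2 * domNum H) :
    romanDomNum (strongProd G H) = 2 * domNum (strongProd G H) := by
  have h1 := roman_le_two_dom (strongProd G H)
  have h2 := dom_prod_le G H
  have h3 := key_lb G H hG
  have h4 : 2 * domNum (strongProd G H) ≤ romanDomNum (strongProd G H) := by
    calc 2 * domNum (strongProd G H) ≤ 2 * (domNum G * domNum H) :=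
          Nat.mul_le_mul_left _ h2
      _ = domNum G * (2 * domNum H) := by ring
      _ = domNum G * romanDomNum H := by rw [hRoman]
      _ ≤ romanDomNum (strongProd G H) := h3
  omega
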